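/- In the subset-sum MDP construction with target t and any ε ∈ (0, 1/2), there exists a subset X ⊆ U with Σ_{x∈X} x = t if and only if BPD_{(t+ε)/N}(M) − BPD_{(t−ε)/N}(M) > 0. -/

import Mathlib

lemma bpd_cond_iff (N : ℕ) (hN : 0 < N) (u : Fin N → ℕ) (b : ℝ)
    (π : (Unit ⊕ Fin N ⊕ Unit) → Bool) :
    ((1 / (N : ℝ)) *
        (∑ i : Fin N, if π (Sum.inr (Sum.inl i)) then (u i : ℝ) else 0) ≤ b / N) ↔
      ((∑ i : Fin N, if π (Sum.inr (Sum.inl i)) then (u i : ℕ) else 0 : ℕ) : ℝ) ≤ b := by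
  have hNpos : (0 : ℝ) < N := by exact_mod_cast hN
  rw [one_div, inv_mul_eq_div, div_le_div_iff₀ hNpos hNpos, mul_le_mul_iff_of_pos_right hNpos]
  push_cast
  rfl

/-- In the subset-sum MDP construction with target t and ε ∈ (0, 1/2), there is a subset
X ⊆ U with Σ_{x∈X} x = t iff `BPD_{(t+ε)/N}(M) − BPD_{(t−ε)/N}(M) > 0`. -/
theorem subset_sum_iff_bpd (N : ℕ) (hN : 0 < N) (u : Fin N → ℕ) (t : ℕ)
    (ε : ℝ) (hε0 : 0 < ε) (hε1 : ε < 1 / 2) :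
    (∃ X : Finset (Fin N), ∑ i ∈ X, u i = t) ↔
      ({π : (Unit ⊕ Fin N ⊕ Unit) → Bool |
            (1 / (N : ℝ)) *
                (∑ i : Fin N, if π (Sum.inr (Sum.inl i)) then (u i : ℝ) else 0) ≤
              ((t : ℝ) + ε) / N}.ncard : ℝ) / 2 ^ (N + 2) -
          ({π : (Unit ⊕ Fin N ⊕ Unit) → Bool |
            (1 / (N : ℝ)) *
                (∑ i : Fin N, if π (Sum.inr (Sum.inl i)) then (u i : ℝ) else 0) ≤
              ((t : ℝ) - ε) / N}.ncard : ℝ) / 2 ^ (N + 2) > 0 := by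
  set S₁ : Set ((Unit ⊕ Fin N ⊕ Unit) → Bool) :=
    {π | (1 / (N : ℝ)) *
        (∑ i : Fin N, if π (Sum.inr (Sum.inl i)) then (u i : ℝ) else 0) ≤ ((t : ℝ) + ε) / N}
    with hS₁
  set S₂ : Set ((Unit ⊕ Fin N ⊕ Unit) → Bool) :=
    {π | (1 / (N : ℝ)) *
        (∑ i : Fin N, if π (Sum.inr (Sum.inl i)) then (u i : ℝ) else 0) ≤ ((t : ℝ) - ε) / N}
    with hS₂
  have hsub : S₂ ⊆ S₁ := by
    intro π hπ
    simp only [hS₁, hS₂, Set.mem_setOf_eq] at *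
    have : (t : ℝ) - ε ≤ (t : ℝ) + ε := by linarith
    calc _ ≤ ((t : ℝ) - ε) / N := hπ
      _ ≤ ((t : ℝ) + ε) / N := by
          apply div_le_div_of_nonneg_right this <;> positivity
  have hfin : S₁.Finite := Set.toFinite _
  have hpow : (0 : ℝ) < 2 ^ (N + 2) := by positivity
  -- the key equivalence: membership in S₁ \ S₂ iff nat-sum equals t
  have hmem : ∀ π : (Unit ⊕ Fin N ⊕ Unit) → Bool,
      π ∈ S₁ \ S₂ ↔ (∑ i : Fin N, if π (Sum.inr (Sum.inl i)) then u i else 0) = t := by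
    intro π
    set n : ℕ := ∑ i : Fin N, if π (Sum.inr (Sum.inl i)) then u i else 0 with hn
    constructor
    · rintro ⟨h1, h2⟩
      rw [hS₁, Set.mem_setOf_eq, bpd_cond_iff N hN u] at h1
      rw [hS₂, Set.mem_setOf_eq, bpd_cond_iff N hN u] at h2
      push_neg at h2
      have hlt : (n : ℝ) < (t : ℝ) + 1 := by linarith
      have hgt : (t : ℝ) - 1 < (n : ℝ) := by linarith
      have h1' : n < t + 1 := by exact_mod_cast hlt
      have h2' : t < n + 1 := by
        have : (t : ℝ) < (n : ℝ) + 1 := by linarith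
        exact_mod_cast this
      omega
    · intro h
      constructor
      · rw [hS₁, Set.mem_setOf_eq, bpd_cond_iff N hN u, ← hn, h]
        linarith
      · rw [hS₂, Set.mem_setOf_eq, bpd_cond_iff N hN u, ← hn, h]
        push_neg
        linarith
  constructor
  · rintro ⟨X, hX⟩
    set π : (Unit ⊕ Fin N ⊕ Unit) → Bool :=
      fun s => match s with
        | Sum.inr (Sum.inl i) => decide (i ∈ X)
        | _ => false with hπ
    have hπmem : π ∈ S₁ \ S₂ := by
      rw [hmem]
      rw [← hX]
      simp only [hπ, decide_eq_true_eq]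
      rw [Finset.sum_ite_mem, Finset.univ_inter]
    have hlt : S₂.ncard < S₁.ncard := by
      apply Set.ncard_lt_ncard _ hfin
      exact ⟨hsub, fun h => hπmem.2 (h hπmem.1)⟩
    have : (S₂.ncard : ℝ) < (S₁.ncard : ℝ) := by exact_mod_cast hlt
    have := div_lt_div_of_pos_right this hpow
    linarith
  · intro h
    have hlt : (S₂.ncard : ℝ) / 2 ^ (N + 2) < (S₁.ncard : ℝ) / 2 ^ (N + 2) := by linarith
    have hlt2 : S₂.ncard < S₁.ncard := by
      have := (div_lt_div_iff_of_pos_right hpow).mp hlt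
      exact_mod_cast this
    have hne : ¬ S₁ ⊆ S₂ := fun hss => by
      have := Set.ncard_le_ncard hss (Set.toFinite _)
      omega
    obtain ⟨π, h1, h2⟩ := Set.not_subset.mp hne
    have := (hmem π).mp ⟨h1, h2⟩
    refine ⟨Finset.univ.filter (fun i => π (Sum.inr (Sum.inl i))), ?_⟩
    rw [Finset.sum_filter]
    exact this
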